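/- Let K, L ≥ 2 be integers and let offers satisfy 0 ≤ s1 ≤ s2 ≤ … ≤ sK ≤ 1 with sK > 0, and let f_L(x) = (1 − (1−x)^L)/x for x ∈ (0,1], f_L(0) = L. A strategy p* ∈ Δ is a symmetric Nash equilibrium of the responder game (i.e. Π(p*,p*) ≥ Π(p,p*) for all p ∈ Δ) if and only if p*_K > 0 and for every i ∈ {1,…,K−1} either (p*_i = 0 and si·f_L(p*_i) ≤ sK·f_L(p*_K)) or (p*_i > 0 and si·f_L(p*_i) = sK·f_L(p*_K)). Moreover there is exactly one p* ∈ Δ satisfying these conditions. -/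

import Mathlib

/-- `W_L(x) = (1 - (1-x)^L)/(L·x)` for `x ∈ (0,1]`, with `W_L(0) = 1`. -/
noncomputable def WL (L : ℕ) (x : ℝ) : ℝ :=
  if x = 0 then 1 else (1 - (1-x)^L) / ((L:ℝ) * x)

/-- The function `f_L(x) = (1 - (1-x)^L)/x` for `x ∈ (0,1]`, with `f_L(0) = L`. -/
noncomputable def fL (L : ℕ) (x : ℝ) : ℝ :=
  if x = 0 then (L:ℝ) else (1 - (1-x)^L) / x

/-- The simplex of mixed strategies over `K` proposers. -/
def simplex (K : ℕ) : Set (Fin K → ℝ) :=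
  {p | (∀ i, 0 ≤ p i) ∧ ∑ i, p i = 1}

/-- Expected payoff of a focal responder playing `p` when each of the other
`L-1` responders plays `q`, given offers `s`. -/
noncomputable def payoff (K L : ℕ) (s p q : Fin K → ℝ) : ℝ :=
  ∑ i, s i * p i * WL L (q i)

/-! ### Auxiliary lemmas -/

noncomputable def flp (L : ℕ) (x : ℝ) : ℝ := ∑ j ∈ Finset.range L, (1-x)^j

lemma fL_eq_flp (L : ℕ) (x : ℝ) : fL L x = flp L x := by
  unfold fL flp
  rcases eq_or_ne x 0 with h | h
  · simp [h]
  · rw [if_neg h]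
    have hg := geom_sum_mul (1-x) L
    have : (∑ j ∈ Finset.range L, (1-x)^j) * x = 1 - (1-x)^L := by linarith [hg]
    field_simp
    linarith [this]

lemma WL_eq_flp (L : ℕ) (hL : L ≠ 0) (x : ℝ) : WL L x = flp L x / L := by
  have hL' : ((L:ℝ)) ≠ 0 := Nat.cast_ne_zero.2 hL
  rcases eq_or_ne x 0 with h | h
  · subst h
    simp [WL, flp, div_self hL']
  · have h1 : flp L x = (1 - (1-x)^L) / x := by
      rw [← fL_eq_flp]; unfold fL; rw [if_neg h]
    rw [WL, if_neg h, h1]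
    rw [div_div]
    ring_nf

lemma fL_eq_L_mul_WL (L : ℕ) (hL : L ≠ 0) (x : ℝ) : fL L x = L * WL L x := by
  rw [fL_eq_flp, WL_eq_flp L hL]
  field_simp

lemma flp_anti (L : ℕ) (hL : 2 ≤ L) : StrictAntiOn (flp L) (Set.Icc 0 1) := by
  intro x hx y hy hxy
  unfold flp
  apply Finset.sum_lt_sum
  · intro j _
    exact pow_le_pow_left₀ (by linarith [hy.2]) (by linarith) j
  · exact ⟨1, Finset.mem_range.2 (by omega), by simpa using hxy⟩

lemma flp_antimono (L : ℕ) : ∀ x ∈ Set.Icc (0:ℝ) 1, ∀ y ∈ Set.Icc (0:ℝ) 1, x ≤ y →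
    flp L y ≤ flp L x := by
  intro x hx y hy hxy
  apply Finset.sum_le_sum
  intro j _
  exact pow_le_pow_left₀ (by linarith [hy.2]) (by linarith) j

lemma flp_ge_one (L : ℕ) (hL : 1 ≤ L) {x : ℝ} (hx : x ≤ 1) : 1 ≤ flp L x := by
  unfold flp
  calc (1:ℝ) = (1-x)^0 := by simp
    _ ≤ ∑ j ∈ Finset.range L, (1-x)^j := by
        apply Finset.single_le_sum (f := fun j => (1-x)^j)
        · intro j _; exact pow_nonneg (by linarith) j
        · exact Finset.mem_range.2 (by omega)

lemma flp_le (L : ℕ) {x : ℝ} (hx : 0 ≤ x) (hx1 : x ≤ 1) : flp L x ≤ L := by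
  unfold flp
  calc ∑ j ∈ Finset.range L, (1-x)^j ≤ ∑ _j ∈ Finset.range L, (1:ℝ) := by
        apply Finset.sum_le_sum; intro j _
        exact pow_le_one₀ (by linarith) (by linarith)
    _ = L := by simp

lemma flp_lt (L : ℕ) (hL : 2 ≤ L) {x : ℝ} (hx : 0 < x) (hx1 : x ≤ 1) : flp L x < L := by
  unfold flp
  have : ∑ j ∈ Finset.range L, (1-x)^j < ∑ _j ∈ Finset.range L, (1:ℝ) := by
    apply Finset.sum_lt_sum
    · intro j _; exact pow_le_one₀ (by linarith) (by linarith)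
    · exact ⟨1, Finset.mem_range.2 (by omega), by simpa using hx⟩
  simpa using this

lemma flp_zero (L : ℕ) : flp L 0 = L := by simp [flp]

lemma flp_cont (L : ℕ) : Continuous (flp L) := by
  unfold flp
  exact continuous_finset_sum _ (fun j _ => by fun_prop)

noncomputable def GG (L : ℕ) (x : ℝ) : ℝ :=
  ∑ j ∈ Finset.range L, (1 - (1-x)^(j+1)) / (j+1)

lemma GG_cont (L : ℕ) : Continuous (GG L) := by
  unfold GG
  exact continuous_finset_sum _ (fun j _ => by fun_prop)

lemma pow_slope {u v : ℝ} (hu : 0 ≤ u) (huv : u ≤ v) (m : ℕ) :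
    ((m:ℝ)+1) * u^m * (v-u) ≤ v^(m+1) - u^(m+1) ∧
    v^(m+1) - u^(m+1) ≤ ((m:ℝ)+1) * v^m * (v-u) := by
  have hv : 0 ≤ v := le_trans hu huv
  have hg := geom_sum₂_mul v u (m+1)
  simp only [Nat.add_sub_cancel] at hg
  have hlow : ((m:ℝ)+1) * u^m ≤ ∑ i ∈ Finset.range (m+1), v ^ i * u ^ (m - i) := by
    calc ((m:ℝ)+1) * u^m = ∑ _i ∈ Finset.range (m+1), u^m := by
          simp [Finset.sum_const]
      _ ≤ _ := by
          apply Finset.sum_le_sum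
          intro i hi
          have hi' : i ≤ m := Nat.lt_succ_iff.mp (Finset.mem_range.mp hi)
          calc u^m = u^i * u^(m-i) := by rw [← pow_add]; congr 1; omega
            _ ≤ v^i * u^(m-i) := by
                apply mul_le_mul_of_nonneg_right (pow_le_pow_left₀ hu huv i)
                exact pow_nonneg hu _
  have hhigh : (∑ i ∈ Finset.range (m+1), v ^ i * u ^ (m - i)) ≤ ((m:ℝ)+1) * v^m := by
    calc (∑ i ∈ Finset.range (m+1), v ^ i * u ^ (m - i))
        ≤ ∑ i ∈ Finset.range (m+1), v^m := by
          apply Finset.sum_le_sum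
          intro i hi
          have hi' : i ≤ m := Nat.lt_succ_iff.mp (Finset.mem_range.mp hi)
          calc v^i * u^(m-i) ≤ v^i * v^(m-i) := by
                apply mul_le_mul_of_nonneg_left (pow_le_pow_left₀ hu huv _)
                exact pow_nonneg hv _
            _ = v^m := by rw [← pow_add]; congr 1; omega
      _ = ((m:ℝ)+1) * v^m := by simp [Finset.sum_const]
  have hvu : 0 ≤ v - u := by linarith
  constructor
  · calc ((m:ℝ)+1) * u^m * (v-u) ≤ (∑ i ∈ Finset.range (m+1), v ^ i * u ^ (m - i)) * (v-u) :=
        mul_le_mul_of_nonneg_right hlow hvu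
      _ = v^(m+1) - u^(m+1) := hg
  · calc v^(m+1) - u^(m+1) = (∑ i ∈ Finset.range (m+1), v ^ i * u ^ (m - i)) * (v-u) := hg.symm
      _ ≤ ((m:ℝ)+1) * v^m * (v-u) := mul_le_mul_of_nonneg_right hhigh hvu

lemma GG_slope (L : ℕ) {x y : ℝ} (hx : 0 ≤ x) (hxy : x ≤ y) (hy : y ≤ 1) :
    (y - x) * flp L y ≤ GG L y - GG L x ∧ GG L y - GG L x ≤ (y - x) * flp L x := by
  set u := 1 - y with hu
  set v := 1 - x with hv
  have hu0 : 0 ≤ u := by simp [hu]; linarith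
  have huv : u ≤ v := by simp [hu, hv]; linarith
  have hdiff : GG L y - GG L x
      = ∑ j ∈ Finset.range L, (v^(j+1) - u^(j+1)) / (j+1) := by
    unfold GG
    rw [← Finset.sum_sub_distrib]
    apply Finset.sum_congr rfl
    intro j _
    rw [div_sub_div_same]
    rw [hu, hv]
    ring_nf
  have hfy : (y - x) * flp L y = ∑ j ∈ Finset.range L, (y-x) * u^j := by
    unfold flp; rw [Finset.mul_sum]
  have hfx : (y - x) * flp L x = ∑ j ∈ Finset.range L, (y-x) * v^j := by
    unfold flp; rw [Finset.mul_sum]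
  have hyx : y - x = v - u := by rw [hu, hv]; ring
  constructor
  · rw [hdiff, hfy]
    apply Finset.sum_le_sum
    intro j _
    have h := (pow_slope hu0 huv j).1
    have hj : (0:ℝ) < (j:ℝ)+1 := by positivity
    rw [hyx]
    rw [le_div_iff₀ hj]
    calc (v-u) * u^j * ((j:ℝ)+1) = ((j:ℝ)+1) * u^j * (v-u) := by ring
      _ ≤ v^(j+1) - u^(j+1) := h
  · rw [hdiff, hfx]
    apply Finset.sum_le_sum
    intro j _
    have h := (pow_slope hu0 huv j).2
    have hj : (0:ℝ) < (j:ℝ)+1 := by positivity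
    rw [hyx]
    rw [div_le_iff₀ hj]
    calc v^(j+1) - u^(j+1) ≤ ((j:ℝ)+1) * v^j * (v-u) := h
      _ = (v-u)*v^j * ((j:ℝ)+1) := by ring

lemma mem_simplex_le_one {K : ℕ} {p : Fin K → ℝ} (hp : p ∈ simplex K) (i : Fin K) :
    p i ≤ 1 := by
  have := Finset.single_le_sum (f := p) (fun j _ => hp.1 j) (Finset.mem_univ i)
  rw [hp.2] at this; exact this

lemma pair_le_one {K : ℕ} {p : Fin K → ℝ} (hp : p ∈ simplex K) {i j : Fin K}
    (hij : i ≠ j) : p i + p j ≤ 1 := by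
  have h1 : ∑ m ∈ ({i, j} : Finset (Fin K)), p m ≤ ∑ m, p m :=
    Finset.sum_le_sum_of_subset_of_nonneg (Finset.subset_univ _) (fun m _ _ => hp.1 m)
  rw [Finset.sum_pair hij, hp.2] at h1
  exact h1

lemma exists_pos_of_mem_simplex {K : ℕ} {p : Fin K → ℝ} (hp : p ∈ simplex K) :
    ∃ i, 0 < p i := by
  by_contra hcon
  push_neg at hcon
  have hz : ∀ i ∈ Finset.univ, p i = 0 := fun i _ => le_antisymm (hcon i) (hp.1 i)
  have := Finset.sum_eq_zero hz
  rw [hp.2] at this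
  norm_num at this

lemma single_mem_simplex {K : ℕ} (i : Fin K) : Pi.single i (1:ℝ) ∈ simplex K := by
  constructor
  · intro j
    rcases eq_or_ne j i with h | h
    · subst h; simp
    · simp [Pi.single_apply, h]
  · simp [Finset.sum_pi_single']

lemma payoff_single {K L : ℕ} (s q : Fin K → ℝ) (i : Fin K) :
    payoff K L s (Pi.single i 1) q = s i * WL L (q i) := by
  unfold payoff
  rw [Finset.sum_eq_single i]
  · simp
  · intro j _ hj
    simp [Pi.single_apply, hj]
  · simp

lemma payoff_self {K L : ℕ} (s p : Fin K → ℝ) :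
    payoff K L s p p = ∑ i, p i * (s i * WL L (p i)) := by
  unfold payoff; apply Finset.sum_congr rfl; intro i _; ring

lemma nash_of_cond {K L : ℕ} (s pstar : Fin K → ℝ) (hps : pstar ∈ simplex K) (k : Fin K)
    (hle : ∀ i, s i * WL L (pstar i) ≤ s k * WL L (pstar k))
    (heq : ∀ i, 0 < pstar i → s i * WL L (pstar i) = s k * WL L (pstar k)) :
    ∀ p ∈ simplex K, payoff K L s p pstar ≤ payoff K L s pstar pstar := by
  intro p hp
  have hself : payoff K L s pstar pstar = s k * WL L (pstar k) := by
    rw [payoff_self]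
    have : ∀ i ∈ Finset.univ, pstar i * (s i * WL L (pstar i))
        = pstar i * (s k * WL L (pstar k)) := by
      intro i _
      rcases eq_or_lt_of_le (hps.1 i) with h | h
      · rw [← h]; ring
      · rw [heq i h]
    rw [Finset.sum_congr rfl this, ← Finset.sum_mul, hps.2, one_mul]
  rw [hself]
  calc payoff K L s p pstar = ∑ i, p i * (s i * WL L (pstar i)) := by
        unfold payoff; apply Finset.sum_congr rfl; intro i _; ring
    _ ≤ ∑ i, p i * (s k * WL L (pstar k)) := by
        apply Finset.sum_le_sum; intro i _
        exact mul_le_mul_of_nonneg_left (hle i) (hp.1 i)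
    _ = s k * WL L (pstar k) := by rw [← Finset.sum_mul, hp.2, one_mul]

lemma nash_le {K L : ℕ} (s pstar : Fin K → ℝ)
    (hnash : ∀ p ∈ simplex K, payoff K L s p pstar ≤ payoff K L s pstar pstar) :
    ∀ i, s i * WL L (pstar i) ≤ payoff K L s pstar pstar := by
  intro i
  have := hnash (Pi.single i 1) (single_mem_simplex i)
  rwa [payoff_single] at this

lemma nash_support_eq {K L : ℕ} (s pstar : Fin K → ℝ) (hps : pstar ∈ simplex K)
    (hnash : ∀ p ∈ simplex K, payoff K L s p pstar ≤ payoff K L s pstar pstar) :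
    ∀ i, 0 < pstar i → s i * WL L (pstar i) = payoff K L s pstar pstar := by
  set V := payoff K L s pstar pstar with hV
  have hVsum : V = ∑ i, pstar i * (s i * WL L (pstar i)) := payoff_self s pstar
  have hsum : ∑ i, pstar i * (V - s i * WL L (pstar i)) = 0 := by
    have : ∀ i ∈ Finset.univ, pstar i * (V - s i * WL L (pstar i))
        = pstar i * V - pstar i * (s i * WL L (pstar i)) := by intro i _; ring
    rw [Finset.sum_congr rfl this, Finset.sum_sub_distrib, ← Finset.sum_mul, hps.2,
      one_mul, ← hVsum, sub_self]
  have hnn : ∀ i ∈ Finset.univ, (0:ℝ) ≤ pstar i * (V - s i * WL L (pstar i)) := by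
    intro i _
    exact mul_nonneg (hps.1 i) (by linarith [nash_le s pstar hnash i])
  have hzero := (Finset.sum_eq_zero_iff_of_nonneg hnn).1 hsum
  intro i hi
  have := hzero i (Finset.mem_univ i)
  have h2 := mul_eq_zero.1 this
  rcases h2 with h2 | h2
  · exact absurd h2 (ne_of_gt hi)
  · linarith

lemma maximizer_key {K L : ℕ} (s : Fin K → ℝ) (hs : ∀ m, 0 ≤ s m)
    {p : Fin K → ℝ} (hp : p ∈ simplex K)
    (hmax : IsMaxOn (fun q => ∑ m, s m * GG L (q m)) (simplex K) p) :
    ∀ i j, 0 < p i → s j * flp L (p j) ≤ s i * flp L (p i) := by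
  intro i j hpi
  by_contra hcon
  push_neg at hcon
  have hij : i ≠ j := by
    intro h; rw [h] at hcon; exact lt_irrefl _ hcon
  set h : ℝ → ℝ := fun ε => s j * flp L (p j + ε) - s i * flp L (p i - ε) with hh
  have hcont : Continuous h := by
    apply Continuous.sub
    · exact continuous_const.mul ((flp_cont L).comp (by fun_prop))
    · exact continuous_const.mul ((flp_cont L).comp (by fun_prop))
  have h0pos : 0 < h 0 := by simp [hh]; linarith
  have hopen : IsOpen {t : ℝ | 0 < h t} := isOpen_lt continuous_const hcont
  obtain ⟨δ, hδ, hball⟩ := Metric.isOpen_iff.1 hopen 0 h0pos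
  set ε := min (δ/2) (p i) with hεdef
  have hε : 0 < ε := lt_min (by linarith) hpi
  have hεpi : ε ≤ p i := min_le_right _ _
  have hεδ : |ε| < δ := by
    rw [abs_of_pos hε]
    calc ε ≤ δ/2 := min_le_left _ _
      _ < δ := by linarith
  have hhε : 0 < h ε := hball (by simpa [Real.dist_eq] using hεδ)
  set q : Fin K → ℝ := fun m => p m + (if m = j then ε else 0) - (if m = i then ε else 0)
    with hq
  have hqi : q i = p i - ε := by simp [hq, hij]
  have hqj : q j = p j + ε := by simp [hq, Ne.symm hij]
  have hqm : ∀ m, m ≠ i → m ≠ j → q m = p m := by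
    intro m hmi hmj; simp [hq, hmi, hmj]
  have hqs : q ∈ simplex K := by
    constructor
    · intro m
      rcases eq_or_ne m i with rfl | hmi
      · rw [hqi]; linarith
      · rcases eq_or_ne m j with rfl | hmj
        · rw [hqj]; have := hp.1 m; linarith
        · rw [hqm m hmi hmj]; exact hp.1 m
    · have e : ∑ m, q m = ∑ m, ((p m + if m = j then ε else 0) - if m = i then ε else 0) :=
        Finset.sum_congr rfl (fun m _ => rfl)
      rw [e, Finset.sum_sub_distrib, Finset.sum_add_distrib, hp.2]
      simp
  have hpj1 : p j + ε ≤ 1 := by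
    have := pair_le_one hp hij
    linarith
  have hpi1 : p i ≤ 1 := mem_simplex_le_one hp i
  have hpj0 : 0 ≤ p j := hp.1 j
  have slope1 := GG_slope L (x := p i - ε) (y := p i) (by linarith) (by linarith) hpi1
  have slope2 := GG_slope L (x := p j) (y := p j + ε) hpj0 (by linarith) hpj1
  have e1 : p i - (p i - ε) = ε := by ring
  have e2 : p j + ε - p j = ε := by ring
  rw [e1] at slope1
  rw [e2] at slope2
  set d : Fin K → ℝ := fun m => s m * GG L (q m) - s m * GG L (p m) with hd
  have hsum : ∑ m, d m = d i + d j := by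
    rw [← Finset.sum_pair hij]
    apply (Finset.sum_subset (Finset.subset_univ _) _).symm
    intro m _ hm
    simp only [Finset.mem_insert, Finset.mem_singleton] at hm
    push_neg at hm
    simp [hd, hqm m hm.1 hm.2]
  have hdi : -(s i * (ε * flp L (p i - ε))) ≤ d i := by
    have := mul_le_mul_of_nonneg_left slope1.2 (hs i)
    simp only [hd, hqi]
    nlinarith [this]
  have hdj : s j * (ε * flp L (p j + ε)) ≤ d j := by
    have := mul_le_mul_of_nonneg_left slope2.1 (hs j)
    simp only [hd, hqj]
    nlinarith [this]
  have hpos2 : 0 < d i + d j := by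
    have : d i + d j ≥ ε * (s j * flp L (p j + ε) - s i * flp L (p i - ε)) := by
      nlinarith [hdi, hdj]
    have h3 : 0 < ε * h ε := mul_pos hε hhε
    simp only [hh] at h3
    linarith
  have hmax' := hmax hqs
  simp only [Set.mem_setOf_eq] at hmax'
  have : ∑ m, d m ≤ 0 := by
    have : ∑ m, (s m * GG L (q m) - s m * GG L (p m))
        = ∑ m, s m * GG L (q m) - ∑ m, s m * GG L (p m) := Finset.sum_sub_distrib _ _
    simp only [hd]
    rw [this]
    exact sub_nonpos.2 hmax'
  rw [hsum] at this
  linarith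

lemma cond_mono {K L : ℕ} (hK : 2 ≤ K) (hL : 2 ≤ L) (s : Fin K → ℝ) (k : Fin K)
    (hkval : (k:ℕ) = K-1) (hposk : 0 < s k)
    {a b : Fin K → ℝ} (ha : a ∈ simplex K) (hb : b ∈ simplex K)
    (hacond : ∀ i : Fin K, (i:ℕ) < K-1 →
      (a i = 0 ∧ s i * flp L (a i) ≤ s k * flp L (a k)) ∨
      (0 < a i ∧ s i * flp L (a i) = s k * flp L (a k)))
    (hbcond : ∀ i : Fin K, (i:ℕ) < K-1 →
      (b i = 0 ∧ s i * flp L (b i) ≤ s k * flp L (b k)) ∨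
      (0 < b i ∧ s i * flp L (b i) = s k * flp L (b k)))
    (hab : a k ≤ b k) : ∀ i, a i ≤ b i := by
  have hak : a k ∈ Set.Icc (0:ℝ) 1 := ⟨ha.1 k, mem_simplex_le_one ha k⟩
  have hbk : b k ∈ Set.Icc (0:ℝ) 1 := ⟨hb.1 k, mem_simplex_le_one hb k⟩
  have hflpk : flp L (b k) ≤ flp L (a k) :=
    flp_antimono L _ hak _ hbk hab
  have hlam : s k * flp L (b k) ≤ s k * flp L (a k) :=
    mul_le_mul_of_nonneg_left hflpk (le_of_lt hposk)
  have hlamq_pos : 0 < s k * flp L (b k) :=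
    mul_pos hposk (lt_of_lt_of_le one_pos (flp_ge_one L (by omega) hbk.2))
  intro i
  rcases lt_or_ge (i:ℕ) (K-1) with hi | hi
  · rcases hacond i hi with ⟨hai, _⟩ | ⟨hai, haeq⟩
    · rw [hai]; exact hb.1 i
    · have hsi_pos : 0 < s i := by
        by_contra hsi
        push_neg at hsi
        have h1 : s i * flp L (a i) ≤ 0 :=
          mul_nonpos_of_nonpos_of_nonneg hsi
            (le_trans zero_le_one (flp_ge_one L (by omega) (mem_simplex_le_one ha i)))
        linarith [haeq, hlam, hlamq_pos]
      rcases hbcond i hi with ⟨hbi, hble⟩ | ⟨hbi, hbeq⟩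
      · exfalso
        rw [hbi, flp_zero] at hble
        have h3 : s i * (L:ℝ) ≤ s i * flp L (a i) := by linarith
        have h4 : flp L (a i) < L :=
          flp_lt L hL hai (mem_simplex_le_one ha i)
        nlinarith
      · have : s i * flp L (b i) ≤ s i * flp L (a i) := by
          rw [hbeq, haeq]; exact hlam
        have hle : flp L (b i) ≤ flp L (a i) := le_of_mul_le_mul_left this hsi_pos
        by_contra hcon
        push_neg at hcon
        have : flp L (a i) < flp L (b i) :=
          flp_anti L hL ⟨hb.1 i, mem_simplex_le_one hb i⟩
            ⟨ha.1 i, mem_simplex_le_one ha i⟩ hcon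
        linarith
  · have : i = k := by
      apply Fin.ext
      rw [hkval]
      omega
    rw [this]
    exact hab

lemma cond_unique {K L : ℕ} (hK : 2 ≤ K) (hL : 2 ≤ L) (s : Fin K → ℝ) (k : Fin K)
    (hkval : (k:ℕ) = K-1) (hposk : 0 < s k)
    {a b : Fin K → ℝ} (ha : a ∈ simplex K) (hb : b ∈ simplex K)
    (hacond : ∀ i : Fin K, (i:ℕ) < K-1 →
      (a i = 0 ∧ s i * flp L (a i) ≤ s k * flp L (a k)) ∨
      (0 < a i ∧ s i * flp L (a i) = s k * flp L (a k)))
    (hbcond : ∀ i : Fin K, (i:ℕ) < K-1 →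
      (b i = 0 ∧ s i * flp L (b i) ≤ s k * flp L (b k)) ∨
      (0 < b i ∧ s i * flp L (b i) = s k * flp L (b k))) :
    a = b := by
  have key : ∀ (u v : Fin K → ℝ), u ∈ simplex K → v ∈ simplex K →
      (∀ i : Fin K, (i:ℕ) < K-1 →
        (u i = 0 ∧ s i * flp L (u i) ≤ s k * flp L (u k)) ∨
        (0 < u i ∧ s i * flp L (u i) = s k * flp L (u k))) →
      (∀ i : Fin K, (i:ℕ) < K-1 →
        (v i = 0 ∧ s i * flp L (v i) ≤ s k * flp L (v k)) ∨
        (0 < v i ∧ s i * flp L (v i) = s k * flp L (v k))) →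
      u k ≤ v k → u = v := by
    intro u v hu hv hcu hcv huv
    have hle := cond_mono hK hL s k hkval hposk hu hv hcu hcv huv
    have hsum : ∑ i, (v i - u i) = 0 := by
      rw [Finset.sum_sub_distrib, hu.2, hv.2, sub_self]
    have hnn : ∀ i ∈ Finset.univ, (0:ℝ) ≤ v i - u i := fun i _ => by linarith [hle i]
    have hz := (Finset.sum_eq_zero_iff_of_nonneg hnn).1 hsum
    funext i
    have := hz i (Finset.mem_univ i)
    linarith
  rcases le_total (a k) (b k) with h | h
  · exact key a b ha hb hacond hbcond h
  · exact (key b a hb ha hbcond hacond h).symm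

lemma WL_le_of_fL_le {L : ℕ} (hL : L ≠ 0) {a b x y : ℝ} (h : a * fL L x ≤ b * fL L y) :
    a * WL L x ≤ b * WL L y := by
  have hLpos : (0:ℝ) < L := by exact_mod_cast Nat.pos_of_ne_zero hL
  rw [fL_eq_L_mul_WL L hL, fL_eq_L_mul_WL L hL] at h
  have e1 : a * ((L:ℝ) * WL L x) = (L:ℝ) * (a * WL L x) := by ring
  have e2 : b * ((L:ℝ) * WL L y) = (L:ℝ) * (b * WL L y) := by ring
  rw [e1, e2] at h
  exact le_of_mul_le_mul_left h hLpos

lemma WL_eq_of_fL_eq {L : ℕ} (hL : L ≠ 0) {a b x y : ℝ} (h : a * fL L x = b * fL L y) :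
    a * WL L x = b * WL L y := by
  have hLpos : (0:ℝ) < L := by exact_mod_cast Nat.pos_of_ne_zero hL
  rw [fL_eq_L_mul_WL L hL, fL_eq_L_mul_WL L hL] at h
  have e1 : a * ((L:ℝ) * WL L x) = (L:ℝ) * (a * WL L x) := by ring
  have e2 : b * ((L:ℝ) * WL L y) = (L:ℝ) * (b * WL L y) := by ring
  rw [e1, e2] at h
  exact mul_left_cancel₀ (ne_of_gt hLpos) h

lemma fL_le_of_WL_le {L : ℕ} (hL : L ≠ 0) {a b x y : ℝ} (h : a * WL L x ≤ b * WL L y) :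
    a * fL L x ≤ b * fL L y := by
  have hLpos : (0:ℝ) < L := by exact_mod_cast Nat.pos_of_ne_zero hL
  rw [fL_eq_L_mul_WL L hL, fL_eq_L_mul_WL L hL]
  have e1 : a * ((L:ℝ) * WL L x) = (L:ℝ) * (a * WL L x) := by ring
  have e2 : b * ((L:ℝ) * WL L y) = (L:ℝ) * (b * WL L y) := by ring
  rw [e1, e2]
  exact mul_le_mul_of_nonneg_left h (le_of_lt hLpos)

lemma fL_eq_of_WL_eq {L : ℕ} (hL : L ≠ 0) {a b x y : ℝ} (h : a * WL L x = b * WL L y) :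
    a * fL L x = b * fL L y := by
  rw [fL_eq_L_mul_WL L hL, fL_eq_L_mul_WL L hL]
  have e1 : a * ((L:ℝ) * WL L x) = (L:ℝ) * (a * WL L x) := by ring
  have e2 : b * ((L:ℝ) * WL L y) = (L:ℝ) * (b * WL L y) := by ring
  rw [e1, e2, h]

theorem stmt13 (K L : ℕ) (hK : 2 ≤ K) (hL : 2 ≤ L)
    (s : Fin K → ℝ) (hmono : Monotone s)
    (h0 : 0 ≤ s ⟨0, by omega⟩) (h1 : s ⟨K-1, by omega⟩ ≤ 1)
    (hpos : 0 < s ⟨K-1, by omega⟩) :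
    (∀ pstar ∈ simplex K,
      ((∀ p ∈ simplex K, payoff K L s p pstar ≤ payoff K L s pstar pstar) ↔
        (0 < pstar ⟨K-1, by omega⟩ ∧
          ∀ i : Fin K, (i:ℕ) < K-1 →
            (pstar i = 0 ∧
              s i * fL L (pstar i) ≤ s ⟨K-1, by omega⟩ * fL L (pstar ⟨K-1, by omega⟩)) ∨
            (0 < pstar i ∧
              s i * fL L (pstar i) = s ⟨K-1, by omega⟩ * fL L (pstar ⟨K-1, by omega⟩))))) ∧
    (∃! pstar : Fin K → ℝ, pstar ∈ simplex K ∧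
      0 < pstar ⟨K-1, by omega⟩ ∧
      ∀ i : Fin K, (i:ℕ) < K-1 →
        (pstar i = 0 ∧
          s i * fL L (pstar i) ≤ s ⟨K-1, by omega⟩ * fL L (pstar ⟨K-1, by omega⟩)) ∨
        (0 < pstar i ∧
          s i * fL L (pstar i) = s ⟨K-1, by omega⟩ * fL L (pstar ⟨K-1, by omega⟩))) := by
  have hL0 : L ≠ 0 := by omega
  have hLcast : (0:ℝ) < (L:ℝ) := by exact_mod_cast Nat.pos_of_ne_zero hL0
  have hK1 : K - 1 < K := by omega
  set k : Fin K := ⟨K-1, hK1⟩ with hkdef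
  have hposk : 0 < s k := hpos
  have hs0 : ∀ m : Fin K, 0 ≤ s m := by
    intro m
    refine le_trans h0 (hmono ?_)
    rw [Fin.le_def]
    exact Nat.zero_le _
  have hsk : ∀ m : Fin K, s m ≤ s k := by
    intro m
    apply hmono
    rw [Fin.le_def]
    exact Nat.le_pred_of_lt m.isLt
  constructor
  · -- equivalence
    intro pstar hps
    constructor
    · -- Nash → conditions
      intro hnash
      have hle := nash_le s pstar hnash
      have heqV := nash_support_eq s pstar hps hnash
      obtain ⟨i0, hi0⟩ := exists_pos_of_mem_simplex hps
      have hpk : 0 < pstar k := by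
        rcases (hps.1 k).lt_or_eq with h | h
        · exact h
        · exfalso
          have hWk : WL L (pstar k) = 1 := by rw [← h]; simp [WL]
          have h1' : s k ≤ payoff K L s pstar pstar := by
            have := hle k; rwa [hWk, mul_one] at this
          have h2 : s i0 * WL L (pstar i0) = payoff K L s pstar pstar := heqV i0 hi0
          have hW0 : 0 ≤ WL L (pstar i0) := by
            rw [WL_eq_flp L hL0]
            apply div_nonneg _ (le_of_lt hLcast)
            linarith [flp_ge_one L (by omega) (mem_simplex_le_one hps i0)]
          have hWlt : WL L (pstar i0) < 1 := by
            rw [WL_eq_flp L hL0, div_lt_one hLcast]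
            exact flp_lt L hL hi0 (mem_simplex_le_one hps i0)
          have h3 : s i0 * WL L (pstar i0) ≤ s k * WL L (pstar i0) :=
            mul_le_mul_of_nonneg_right (hsk i0) hW0
          have h4 : s k * WL L (pstar i0) < s k * 1 :=
            (mul_lt_mul_iff_right₀ hposk).2 hWlt
          rw [mul_one] at h4
          linarith
      have hck : s k * WL L (pstar k) = payoff K L s pstar pstar := heqV k hpk
      refine ⟨hpk, ?_⟩
      intro i hi
      rcases (hps.1 i).lt_or_eq with h | h
      · right
        refine ⟨h, ?_⟩
        apply fL_eq_of_WL_eq hL0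
        rw [heqV i h, hck]
      · left
        refine ⟨h.symm, ?_⟩
        apply fL_le_of_WL_le hL0
        rw [hck]
        exact hle i
    · -- conditions → Nash
      rintro ⟨hpk, hcond⟩
      apply nash_of_cond s pstar hps k
      · intro i
        rcases lt_or_ge (i:ℕ) (K-1) with hi | hi
        · rcases hcond i hi with ⟨_, hfle⟩ | ⟨_, hfeq⟩
          · exact WL_le_of_fL_le hL0 hfle
          · exact le_of_eq (WL_eq_of_fL_eq hL0 hfeq)
        · have : i = k := by
            apply Fin.ext
            have := i.isLt
            simp only [hkdef]
            omega
          rw [this]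
      · intro i hi
        rcases lt_or_ge (i:ℕ) (K-1) with h | h
        · rcases hcond i h with ⟨hz, _⟩ | ⟨_, hfeq⟩
          · exfalso; rw [hz] at hi; exact lt_irrefl _ hi
          · exact WL_eq_of_fL_eq hL0 hfeq
        · have : i = k := by
            apply Fin.ext
            have := i.isLt
            simp only [hkdef]
            omega
          rw [this]
  · -- existence and uniqueness
    have hCont : ContinuousOn (fun q : Fin K → ℝ => ∑ m, s m * GG L (q m)) (simplex K) := by
      apply Continuous.continuousOn
      apply continuous_finset_sum
      intro m _
      exact continuous_const.mul ((GG_cont L).comp (continuous_apply m))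
    have hne : (simplex K).Nonempty := by
      refine ⟨fun _ => (K:ℝ)⁻¹, fun i => by positivity, ?_⟩
      rw [Finset.sum_const, Finset.card_univ, Fintype.card_fin, nsmul_eq_mul]
      have hKne : (K:ℝ) ≠ 0 := Nat.cast_ne_zero.2 (by omega)
      field_simp
    have hcompact : IsCompact (simplex K) := isCompact_stdSimplex ℝ (Fin K)
    obtain ⟨p, hpmem, hpmax⟩ := hcompact.exists_isMaxOn hne hCont
    have key := maximizer_key s hs0 hpmem hpmax
    obtain ⟨i0, hi0⟩ := exists_pos_of_mem_simplex hpmem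
    have hpk : 0 < p k := by
      rcases (hpmem.1 k).lt_or_eq with h | h
      · exact h
      · exfalso
        have h1' := key i0 k hi0
        rw [← h, flp_zero] at h1'
        have h4 : flp L (p i0) < L := flp_lt L hL hi0 (mem_simplex_le_one hpmem i0)
        have h5 : 0 ≤ flp L (p i0) :=
          le_trans zero_le_one (flp_ge_one L (by omega) (mem_simplex_le_one hpmem i0))
        have h6 : s i0 * flp L (p i0) ≤ s k * flp L (p i0) :=
          mul_le_mul_of_nonneg_right (hsk i0) h5
        have h7 : s k * flp L (p i0) < s k * L := (mul_lt_mul_iff_right₀ hposk).2 h4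
        linarith
    have hcondp : ∀ i : Fin K, (i:ℕ) < K-1 →
        (p i = 0 ∧ s i * flp L (p i) ≤ s k * flp L (p k)) ∨
        (0 < p i ∧ s i * flp L (p i) = s k * flp L (p k)) := by
      intro i hi
      rcases (hpmem.1 i).lt_or_eq with h | h
      · right
        exact ⟨h, le_antisymm (key k i hpk) (key i k h)⟩
      · left
        exact ⟨h.symm, key k i hpk⟩
    refine ⟨p, ⟨hpmem, hpk, ?_⟩, ?_⟩
    · intro i hi
      rcases hcondp i hi with ⟨h1', h2⟩ | ⟨h1', h2⟩
      · left
        refine ⟨h1', ?_⟩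
        rw [fL_eq_flp, fL_eq_flp]
        exact h2
      · right
        refine ⟨h1', ?_⟩
        rw [fL_eq_flp, fL_eq_flp]
        exact h2
    · rintro q ⟨hqmem, hqk, hqcond⟩
      apply cond_unique hK hL s k rfl hposk hqmem hpmem ?_ hcondp
      intro i hi
      rcases hqcond i hi with ⟨h1', h2⟩ | ⟨h1', h2⟩
      · left
        refine ⟨h1', ?_⟩
        rw [← fL_eq_flp, ← fL_eq_flp]
        exact h2
      · right
        refine ⟨h1', ?_⟩
        rw [← fL_eq_flp, ← fL_eq_flp]
        exact h2
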